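/- Let 1 ≤ p < ∞ and let M, N be infinite sets of positive integers with ΓL₁(M, N) < ∞. Then for every k and all scalars α₁,…,α_k, ‖Σ_{j=1}^k αⱼ e_{nⱼ}‖_{S_p} ≤ ΓL₁(M,N)^{1/p} · ‖Σ_{j=1}^k αⱼ e_{mⱼ}‖_{S_p}, where M = {m₁ < m₂ < ⋯} and N = {n₁ < n₂ < ⋯} are the increasing enumerations. -/

import Mathlib

open Finset Filter

/-- A Schreier set: a finite set of naturals whose cardinality is at most its minimum
(elements are automatically positive when nonempty). -/
def IsSchreier (F : Finset ℕ) : Prop := ∀ h : F.Nonempty, F.card ≤ F.min' h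

/-- A maximal Schreier set: nonempty with cardinality equal to its minimum. -/
def IsMaxSchreier (F : Finset ℕ) : Prop := ∃ h : F.Nonempty, F.card = F.min' h

/-- A (possibly empty) list of nonempty successive Schreier sets. -/
def SchreierChainList (C : List (Finset ℕ)) : Prop :=
  (∀ F ∈ C, IsSchreier F ∧ F.Nonempty) ∧
  C.Chain' (fun F G => ∀ a ∈ F, ∀ b ∈ G, a < b)

/-- A Schreier chain: a nonempty finite list of nonempty successive Schreier sets. -/
def IsSchreierChain (C : List (Finset ℕ)) : Prop := C ≠ [] ∧ SchreierChainList C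

def chainUnion (C : List (Finset ℕ)) : Finset ℕ := C.foldr (· ∪ ·) ∅

noncomputable def mu (p : ℝ) (x : ℕ → ℝ) (F : Finset ℕ) : ℝ :=
  (∑ n ∈ F, |x n| ^ p) ^ (1 / p)

/-- The p-th Schreier norm of a (finitely supported) sequence. -/
noncomputable def schreierNorm (p : ℝ) (x : ℕ → ℝ) : ℝ :=
  sSup {r | ∃ F : Finset ℕ, IsSchreier F ∧ F.Nonempty ∧ r = mu p x F}

noncomputable def betaNorm (p : ℝ) (x : ℕ → ℝ) (C : List (Finset ℕ)) : ℝ :=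
  ((C.map fun F => (∑ n ∈ F, |x n|) ^ p).sum) ^ (1 / p)

/-- The p-th Baernstein norm of a (finitely supported) sequence. -/
noncomputable def baernsteinNorm (p : ℝ) (x : ℕ → ℝ) : ℝ :=
  sSup {r | ∃ C : List (Finset ℕ), IsSchreierChain C ∧ r = betaNorm p x C}

/-- The Schreier covering number of a finite set. -/
noncomputable def tau1 (A : Finset ℕ) : ℕ :=
  sInf {m | ∃ C : List (Finset ℕ), SchreierChainList C ∧ C.length = m ∧ A ⊆ chainUnion C}

/-- Increasing enumeration of a set of naturals (0-indexed). -/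
noncomputable def enumSet (M : Set ℕ) : ℕ → ℕ := Nat.nth (· ∈ M)

/-- `M(J)`: the image of an index set `J` under the increasing enumeration of `M`. -/
noncomputable def subImage (M : Set ℕ) (J : Finset ℕ) : Finset ℕ := J.image (enumSet M)

/-- The Gasparis–Leung index `ΓL₁(M, N) ∈ ℕ ∪ {∞}`. -/
noncomputable def GLindex (M N : Set ℕ) : ℕ∞ :=
  ⨆ J ∈ {J : Finset ℕ | IsSchreier (subImage N J)}, (tau1 (subImage M J) : ℕ∞)


section Aux

lemma isSchreier_subset {F G : Finset ℕ} (hG : IsSchreier G) (h : F ⊆ G) : IsSchreier F := by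
  intro hF
  have hGne : G.Nonempty := hF.mono h
  calc F.card ≤ G.card := Finset.card_le_card h
    _ ≤ G.min' hGne := hG hGne
    _ ≤ F.min' hF := Finset.le_min' _ _ _ (fun y hy => Finset.min'_le _ _ (h hy))

lemma mem_chainUnion {C : List (Finset ℕ)} {x : ℕ} :
    x ∈ chainUnion C ↔ ∃ F ∈ C, x ∈ F := by
  induction C with
  | nil => simp [chainUnion]
  | cons F t ih =>
    simp only [chainUnion, List.foldr, Finset.mem_union, List.mem_cons] at ih ⊢; aesop

lemma exists_chain_cover (A : Finset ℕ) (hA : ∀ a ∈ A, 0 < a) :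
    ∃ C : List (Finset ℕ), SchreierChainList C ∧ A ⊆ chainUnion C := by
  refine ⟨(A.sort (· ≤ ·)).map ({·}), ⟨?_, ?_⟩, ?_⟩
  · intro F hF
    simp only [List.mem_map] at hF
    obtain ⟨a, ha, rfl⟩ := hF
    have ha' : a ∈ A := (Finset.mem_sort _).1 ha
    refine ⟨fun h => ?_, Finset.singleton_nonempty a⟩
    simp only [Finset.card_singleton, Finset.min'_singleton]
    exact hA a ha'
  · refine List.isChain_map_of_isChain _ ?_ ((A.sortedLT_sort).isChain)
    intro a b hab x hx y hy
    simp only [Finset.mem_singleton] at hx hy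
    omega
  · intro x hx
    rw [mem_chainUnion]
    exact ⟨{x}, List.mem_map_of_mem ((Finset.mem_sort _).2 hx), Finset.mem_singleton_self x⟩

lemma sum_abs_rpow (p : ℝ) (hp : 0 < p) (g : ℕ → ℕ) (hg : Function.Injective g)
    (β : ℕ → ℝ) (k : ℕ) (F : Finset ℕ) :
    ∑ n ∈ F, |∑ j ∈ Finset.range k, if g j = n then β j else 0| ^ p
      = ∑ j ∈ (Finset.range k).filter (fun j => g j ∈ F), |β j| ^ p := by
  classical
  have key : ∀ j ∈ Finset.range k,
      (∑ j' ∈ Finset.range k, if g j' = g j then β j' else 0) = β j := by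
    intro j hj
    have h1 : ∀ j', (if g j' = g j then β j' else 0) = if j' = j then β j' else 0 := by
      intro j'; simp [hg.eq_iff]
    simp_rw [h1]
    rw [Finset.sum_ite_eq' (Finset.range k) j β]
    simp [Finset.mem_range.1 hj]
  rw [← Finset.sum_filter_add_sum_filter_not F (fun n => n ∈ (Finset.range k).image g)]
  have h2 : ∑ n ∈ F.filter (fun n => ¬ n ∈ (Finset.range k).image g),
      |∑ j ∈ Finset.range k, if g j = n then β j else 0| ^ p = 0 := by
    apply Finset.sum_eq_zero
    intro n hn
    simp only [Finset.mem_filter, Finset.mem_image, Finset.mem_range] at hn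
    have h0 : (∑ j ∈ Finset.range k, if g j = n then β j else 0) = 0 := by
      apply Finset.sum_eq_zero
      intro j hj
      rw [if_neg]
      exact fun h => hn.2 ⟨j, Finset.mem_range.1 hj, h⟩
    rw [h0, abs_zero, Real.zero_rpow hp.ne']
  have h3 : F.filter (fun n => n ∈ (Finset.range k).image g)
      = ((Finset.range k).filter (fun j => g j ∈ F)).image g := by
    ext n
    simp only [Finset.mem_filter, Finset.mem_image, Finset.mem_range]
    constructor
    · rintro ⟨hnF, j, hj, rfl⟩; exact ⟨j, ⟨hj, hnF⟩, rfl⟩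
    · rintro ⟨j, ⟨hj, hgF⟩, rfl⟩; exact ⟨hgF, j, hj, rfl⟩
  rw [h2, add_zero, h3, Finset.sum_image (fun a _ b _ h => hg h)]
  apply Finset.sum_congr rfl
  intro j hj
  rw [key j (Finset.mem_filter.1 hj).1]

lemma mu_nonneg (p : ℝ) (x : ℕ → ℝ) (F : Finset ℕ) : 0 ≤ mu p x F :=
  Real.rpow_nonneg (Finset.sum_nonneg fun n _ => Real.rpow_nonneg (abs_nonneg _) p) _

lemma schreierNorm_nonneg_and_le (p : ℝ) (hp : 0 < p) (g : ℕ → ℕ) (hg : Function.Injective g)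
    (β : ℕ → ℝ) (k : ℕ) :
    0 ≤ schreierNorm p (fun n => ∑ j ∈ Finset.range k, if g j = n then β j else 0) ∧
    ∀ F : Finset ℕ, IsSchreier F → F.Nonempty →
      mu p (fun n => ∑ j ∈ Finset.range k, if g j = n then β j else 0) F ≤
        schreierNorm p (fun n => ∑ j ∈ Finset.range k, if g j = n then β j else 0) := by
  classical
  set x : ℕ → ℝ := fun n => ∑ j ∈ Finset.range k, if g j = n then β j else 0 with hx
  have hbdd : BddAbove {r | ∃ F : Finset ℕ, IsSchreier F ∧ F.Nonempty ∧ r = mu p x F} := by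
    refine ⟨(∑ j ∈ Finset.range k, |β j| ^ p) ^ (1 / p), ?_⟩
    rintro r ⟨F, hF, hFne, rfl⟩
    rw [mu, hx]
    simp only
    rw [sum_abs_rpow p hp g hg β k F]
    apply Real.rpow_le_rpow (Finset.sum_nonneg fun j _ => Real.rpow_nonneg (abs_nonneg _) p)
    · exact Finset.sum_le_sum_of_subset_of_nonneg (Finset.filter_subset _ _)
        (fun j _ _ => Real.rpow_nonneg (abs_nonneg _) p)
    · positivity
  have hle : ∀ F : Finset ℕ, IsSchreier F → F.Nonempty → mu p x F ≤ schreierNorm p x := by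
    intro F hF hFne
    exact le_csSup hbdd ⟨F, hF, hFne, rfl⟩
  have hone : IsSchreier {1} := by intro h; simp
  refine ⟨le_trans (mu_nonneg p x {1}) (hle _ hone (Finset.singleton_nonempty 1)), hle⟩

lemma sum_le_chainUnion_cover (g : ℕ → ℕ) (c : ℕ → ℝ) (hc : ∀ j, 0 ≤ c j) :
    ∀ (C' : List (Finset ℕ)) (J : Finset ℕ), (∀ j ∈ J, g j ∈ chainUnion C') →
    ∑ j ∈ J, c j ≤ (C'.map (fun F => ∑ j ∈ J.filter (fun j => g j ∈ F), c j)).sum := by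
  classical
  intro C'
  induction C' with
  | nil =>
    intro J hJ
    simp only [List.map_nil, List.sum_nil]
    have hJe : J = ∅ := by
      ext j
      simp only [Finset.notMem_empty, iff_false]
      intro hj
      simpa [chainUnion] using hJ j hj
    simp [hJe]
  | cons F t ih =>
    intro J hJ
    rw [← Finset.sum_filter_add_sum_filter_not J (fun j => g j ∈ F)]
    simp only [List.map_cons, List.sum_cons]
    refine add_le_add le_rfl ?_
    calc ∑ j ∈ J.filter (fun j => ¬ g j ∈ F), c j
        ≤ (t.map (fun F' =>
            ∑ j ∈ (J.filter (fun j => ¬ g j ∈ F)).filter (fun j => g j ∈ F'), c j)).sum := by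
          apply ih
          intro j hj
          have hj1 := Finset.mem_filter.1 hj
          have hj2 := hJ j hj1.1
          rw [mem_chainUnion] at hj2 ⊢
          obtain ⟨F', hF', hmem⟩ := hj2
          rcases List.mem_cons.1 hF' with rfl | hF't
          · exact absurd hmem hj1.2
          · exact ⟨F', hF't, hmem⟩
      _ ≤ (t.map (fun F' => ∑ j ∈ J.filter (fun j => g j ∈ F'), c j)).sum := by
          apply List.sum_le_sum
          intro F' _
          apply Finset.sum_le_sum_of_subset_of_nonneg
          · intro j hj
            simp only [Finset.mem_filter] at hj ⊢
            exact ⟨hj.1.1, hj.2⟩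
          · exact fun j _ _ => hc j

lemma sum_le_card_mul (p : ℝ) (hp : 0 < p) (g : ℕ → ℕ) (hg : Function.Injective g)
    (β : ℕ → ℝ) (k : ℕ) (J : Finset ℕ) (hJk : J ⊆ Finset.range k)
    (C' : List (Finset ℕ)) (hC : SchreierChainList C')
    (hcov : ∀ j ∈ J, g j ∈ chainUnion C') :
    ∑ j ∈ J, |β j| ^ p ≤ (C'.length : ℝ) *
      (schreierNorm p (fun n => ∑ j ∈ Finset.range k, if g j = n then β j else 0)) ^ p := by
  classical
  set x : ℕ → ℝ := fun n => ∑ j ∈ Finset.range k, if g j = n then β j else 0 with hx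
  obtain ⟨hnn, hle⟩ := schreierNorm_nonneg_and_le p hp g hg β k
  calc ∑ j ∈ J, |β j| ^ p
      ≤ (C'.map (fun F => ∑ j ∈ J.filter (fun j => g j ∈ F), |β j| ^ p)).sum :=
        sum_le_chainUnion_cover g (fun j => |β j| ^ p)
          (fun j => Real.rpow_nonneg (abs_nonneg _) p) C' J hcov
    _ ≤ (C'.map (fun _ => (schreierNorm p x) ^ p)).sum := by
        apply List.sum_le_sum
        intro F hF
        set J1 := J.filter (fun j => g j ∈ F) with hJ1
        set G := J1.image g with hG
        have hfilt : (Finset.range k).filter (fun j => g j ∈ G) = J1 := by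
          ext j
          simp only [Finset.mem_filter, hG, Finset.mem_image]
          constructor
          · rintro ⟨hjk, j', hj', hgj⟩
            rwa [← hg hgj]
          · intro hj
            exact ⟨Finset.mem_range.1 (hJk (Finset.mem_filter.1 hj).1) |> Finset.mem_range.2
              |> fun h => h, j, hj, rfl⟩
        have hsum : ∑ j ∈ J1, |β j| ^ p = ∑ n ∈ G, |x n| ^ p := by
          rw [← hfilt]
          exact (sum_abs_rpow p hp g hg β k G).symm
        rw [hsum]
        by_cases hGe : G.Nonempty
        · have hGsub : G ⊆ F := by
            intro n hn
            simp only [hG, Finset.mem_image] at hn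
            obtain ⟨j, hj, rfl⟩ := hn
            exact (Finset.mem_filter.1 hj).2
          have hGS : IsSchreier G := isSchreier_subset (hC.1 F hF).1 hGsub
          have heq : ∑ n ∈ G, |x n| ^ p = (mu p x G) ^ p := by
            rw [mu, one_div, Real.rpow_inv_rpow
              (Finset.sum_nonneg fun n _ => Real.rpow_nonneg (abs_nonneg _) p) hp.ne']
          rw [heq]
          exact Real.rpow_le_rpow (mu_nonneg p x G) (hle G hGS hGe) hp.le
        · rw [Finset.not_nonempty_iff_eq_empty.1 hGe]
          simp only [Finset.sum_empty]
          exact Real.rpow_nonneg hnn p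
    _ = (C'.length : ℝ) * (schreierNorm p x) ^ p := by
        rw [List.map_const', List.sum_replicate, nsmul_eq_mul]

end Aux

/-- If ΓL₁(M, N) = C < ∞, then (e_m)_{m∈M} C^(1/p)-dominates (e_n)_{n∈N} in the
Schreier norm. -/
theorem schreier_domination_of_GLindex (p : ℝ) (hp : 1 ≤ p) (M N : Set ℕ)
    (hM : M.Infinite) (hN : N.Infinite)
    (hMpos : ∀ m ∈ M, 0 < m) (hNpos : ∀ n ∈ N, 0 < n)
    (C : ℕ) (hGL : GLindex M N = (C : ℕ∞)) (k : ℕ) (α : Fin k → ℝ) :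
    schreierNorm p (fun n => ∑ j : Fin k, if enumSet N (j : ℕ) = n then α j else 0) ≤
      (C : ℝ) ^ (1 / p) *
        schreierNorm p (fun n => ∑ j : Fin k, if enumSet M (j : ℕ) = n then α j else 0) := by
  classical
  have hp0 : 0 < p := lt_of_lt_of_le one_pos hp
  set β : ℕ → ℝ := fun j => if h : j < k then α ⟨j, h⟩ else 0 with hβ
  have hgN : Function.Injective (enumSet N) := Nat.nth_injective (by simpa using hN)
  have hgM : Function.Injective (enumSet M) := Nat.nth_injective (by simpa using hM)
  have hxN : (fun n => ∑ j : Fin k, if enumSet N (j : ℕ) = n then α j else 0)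
      = fun n => ∑ j ∈ Finset.range k, if enumSet N j = n then β j else 0 := by
    funext n
    rw [← Fin.sum_univ_eq_sum_range (fun j => if enumSet N j = n then β j else 0) k]
    apply Finset.sum_congr rfl
    intro j _
    simp [hβ, j.isLt]
  have hxM : (fun n => ∑ j : Fin k, if enumSet M (j : ℕ) = n then α j else 0)
      = fun n => ∑ j ∈ Finset.range k, if enumSet M j = n then β j else 0 := by
    funext n
    rw [← Fin.sum_univ_eq_sum_range (fun j => if enumSet M j = n then β j else 0) k]
    apply Finset.sum_congr rfl
    intro j _
    simp [hβ, j.isLt]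
  rw [hxN, hxM]
  obtain ⟨hMnn, hMle⟩ := schreierNorm_nonneg_and_le p hp0 (enumSet M) hgM β k
  apply Real.sSup_le
  · rintro r ⟨F, hF, hFne, rfl⟩
    set J := (Finset.range k).filter (fun j => enumSet N j ∈ F) with hJ
    have hJk : J ⊆ Finset.range k := Finset.filter_subset _ _
    have hNJ : IsSchreier (subImage N J) := by
      apply isSchreier_subset hF
      intro n hn
      simp only [subImage, Finset.mem_image] at hn
      obtain ⟨j, hj, rfl⟩ := hn
      exact (Finset.mem_filter.1 hj).2
    have htau : tau1 (subImage M J) ≤ C := by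
      have h1 : (tau1 (subImage M J) : ℕ∞) ≤ GLindex M N := by
        unfold GLindex
        exact le_iSup₂ (f := fun (J : Finset ℕ)
          (_ : J ∈ {J : Finset ℕ | IsSchreier (subImage N J)}) =>
          (tau1 (subImage M J) : ℕ∞)) J hNJ
      rw [hGL] at h1
      exact_mod_cast h1
    have hpos : ∀ a ∈ subImage M J, 0 < a := by
      intro a ha
      simp only [subImage, Finset.mem_image] at ha
      obtain ⟨j, _, rfl⟩ := ha
      exact hMpos _ (Nat.nth_mem_of_infinite (by simpa using hM) j)
    obtain ⟨C₀, hC₀, hcov₀⟩ := exists_chain_cover _ hpos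
    have hmem : tau1 (subImage M J) ∈ {m | ∃ C : List (Finset ℕ),
        SchreierChainList C ∧ C.length = m ∧ subImage M J ⊆ chainUnion C} :=
      Nat.sInf_mem ⟨C₀.length, C₀, hC₀, rfl, hcov₀⟩
    obtain ⟨C', hC', hlen, hcov⟩ := hmem
    have hmuN : mu p (fun n => ∑ j ∈ Finset.range k, if enumSet N j = n then β j else 0) F
        = (∑ j ∈ J, |β j| ^ p) ^ (1 / p) := by
      rw [mu]
      congr 1
      exact sum_abs_rpow p hp0 (enumSet N) hgN β k F
    rw [hmuN]
    have hcov' : ∀ j ∈ J, enumSet M j ∈ chainUnion C' := by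
      intro j hj
      exact hcov (Finset.mem_image_of_mem _ hj)
    have hsum : ∑ j ∈ J, |β j| ^ p ≤ (C'.length : ℝ) *
        (schreierNorm p (fun n => ∑ j ∈ Finset.range k, if enumSet M j = n then β j else 0)) ^ p :=
      sum_le_card_mul p hp0 (enumSet M) hgM β k J hJk C' hC' hcov'
    set sM := schreierNorm p (fun n => ∑ j ∈ Finset.range k, if enumSet M j = n then β j else 0)
      with hsM
    have hlenC : (C'.length : ℝ) ≤ (C : ℝ) := by
      have : C'.length ≤ C := hlen ▸ htau
      exact_mod_cast this
    have hsum2 : ∑ j ∈ J, |β j| ^ p ≤ (C : ℝ) * sM ^ p :=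
      le_trans hsum (mul_le_mul_of_nonneg_right hlenC (Real.rpow_nonneg hMnn p))
    calc (∑ j ∈ J, |β j| ^ p) ^ (1 / p)
        ≤ ((C : ℝ) * sM ^ p) ^ (1 / p) :=
          Real.rpow_le_rpow
            (Finset.sum_nonneg fun j _ => Real.rpow_nonneg (abs_nonneg _) p) hsum2
            (by positivity)
      _ = (C : ℝ) ^ (1 / p) * (sM ^ p) ^ (1 / p) :=
          Real.mul_rpow (Nat.cast_nonneg C) (Real.rpow_nonneg hMnn p)
      _ = (C : ℝ) ^ (1 / p) * sM := by
          rw [one_div, Real.rpow_rpow_inv hMnn hp0.ne']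
  · exact mul_nonneg (Real.rpow_nonneg (Nat.cast_nonneg C) _) hMnn
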